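/- Let r ≥ 2 and ℓ ≥ 1 be integers with gcd(r, ℓ) = 2, and set m = 2^r(2^ℓ + 1) and d = (m - 2)/2. Then gcd(d, 2^(2ℓ) - 1) = 3. -/

import Mathlib

theorem gcd_d_three (r ℓ : ℕ) (hr : 2 ≤ r) (hℓ : 1 ≤ ℓ) (hgcd : Nat.gcd r ℓ = 2)
    (m d : ℕ) (hm : m = 2 ^ r * (2 ^ ℓ + 1)) (hd : d = (m - 2) / 2) :
    Nat.gcd d (2 ^ (2 * ℓ) - 1) = 3 := by
  -- notation
  set x := 2 ^ ℓ with hx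
  set p := 2 ^ (r - 1) with hp
  have hx2 : 2 ≤ x := Nat.one_lt_two_pow_iff.mpr (by omega)
  have hp2 : 2 ≤ p := Nat.one_lt_two_pow_iff.mpr (by omega)
  have h2r : 2 ^ r = 2 * p := by rw [hp, ← pow_succ']; congr 1; omega
  -- d + 1 = p * (x + 1)
  have hd1 : d + 1 = p * (x + 1) := by
    have : m = 2 * (p * (x + 1)) := by rw [hm, h2r]; ring
    have hpx : 1 ≤ p * (x + 1) := Nat.one_le_iff_ne_zero.mpr (by positivity)
    subst hd; omega
  -- r and ℓ are even
  have h2r' : 2 ∣ r := hgcd ▸ Nat.gcd_dvd_left r ℓ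
  have h2ℓ' : 2 ∣ ℓ := hgcd ▸ Nat.gcd_dvd_right r ℓ
  obtain ⟨a, ha⟩ := h2r'
  obtain ⟨b, hb⟩ := h2ℓ'
  -- N = 2^(2ℓ) - 1 = (x+1)*(x-1)
  have hN : 2 ^ (2 * ℓ) - 1 = (x + 1) * (x - 1) := by
    have : 2 ^ (2 * ℓ) = x ^ 2 := by rw [hx, ← pow_mul, Nat.mul_comm]
    rw [this]
    have := Nat.sq_sub_sq x 1
    simpa using this
  set N := 2 ^ (2 * ℓ) - 1 with hNdef
  -- key identity A : d*(x-1) + (x-1) = p * N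
  have hA : d * (x - 1) + (x - 1) = p * N := by
    have : (d + 1) * (x - 1) = p * ((x + 1) * (x - 1)) := by rw [hd1]; ring
    rw [hN]
    calc d * (x - 1) + (x - 1) = (d + 1) * (x - 1) := by ring
      _ = p * ((x + 1) * (x - 1)) := this
  -- key identity B : d = p*(x-1) + (2*p - 1)
  have hB : d = p * (x - 1) + (2 * p - 1) := by
    have h1 : p * (x - 1) + 2 * p = p * (x + 1) := by
      have hxx : x - 1 + 2 = x + 1 := by omega
      calc p * (x - 1) + 2 * p = p * ((x - 1) + 2) := by ring
        _ = p * (x + 1) := by rw [hxx]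
    omega
  set g := Nat.gcd d N with hg
  have hgd : g ∣ d := Nat.gcd_dvd_left _ _
  have hgN : g ∣ N := Nat.gcd_dvd_right _ _
  -- g ∣ x - 1
  have hgx : g ∣ x - 1 := by
    have h1 : g ∣ d * (x - 1) + (x - 1) := hA ▸ hgN.mul_left p
    exact (Nat.dvd_add_right (hgd.mul_right _)).mp h1
  -- g ∣ 2*p - 1
  have hgp : g ∣ 2 * p - 1 := by
    have h1 : g ∣ p * (x - 1) + (2 * p - 1) := hB ▸ hgd
    exact (Nat.dvd_add_right (hgx.mul_left p)).mp h1
  -- hence g ∣ 2^ℓ - 1 and g ∣ 2^r - 1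
  have hgr : g ∣ 2 ^ r - 1 := by rwa [h2r]
  have hgl : g ∣ 2 ^ ℓ - 1 := hgx
  -- N > 0 so g > 0
  have hNpos : 0 < N := by
    have : 2 ≤ 2 ^ (2 * ℓ) := Nat.one_lt_two_pow_iff.mpr (by omega)
    omega
  have hgpos : 0 < g := Nat.gcd_pos_of_pos_right _ hNpos
  -- g ∣ 3 via orders in ZMod g
  have hg3 : g ∣ 3 := by
    haveI : NeZero g := ⟨hgpos.ne'⟩
    have e1 : ((2 : ZMod g)) ^ r = 1 := by
      have : ((2 ^ r - 1 : ℕ) : ZMod g) = 0 :=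
        (ZMod.natCast_eq_zero_iff _ _).mpr hgr
      have h1 : (1 : ℕ) ≤ 2 ^ r := Nat.one_le_two_pow
      rw [Nat.cast_sub h1] at this
      push_cast at this
      linear_combination this
    have e2 : ((2 : ZMod g)) ^ ℓ = 1 := by
      have : ((2 ^ ℓ - 1 : ℕ) : ZMod g) = 0 :=
        (ZMod.natCast_eq_zero_iff _ _).mpr hgl
      have h1 : (1 : ℕ) ≤ 2 ^ ℓ := Nat.one_le_two_pow
      rw [Nat.cast_sub h1] at this
      push_cast at this
      linear_combination this
    have e3 : ((2 : ZMod g)) ^ Nat.gcd r ℓ = 1 := pow_gcd_eq_one.mpr ⟨e1, e2⟩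
    rw [hgcd] at e3
    have : ((3 : ℕ) : ZMod g) = 0 := by push_cast; linear_combination e3
    exact (ZMod.natCast_eq_zero_iff _ _).mp this
  -- 3 ∣ g
  have h34 : (3 : ℕ) ∣ 4 ^ b - 1 ∧ (3 : ℕ) ∣ 4 ^ a - 1 := by
    constructor <;> simpa using Nat.sub_dvd_pow_sub_pow 4 1 _
  have h3x : (3 : ℕ) ∣ x - 1 := by
    have : x = 4 ^ b := by rw [hx, hb, pow_mul]; norm_num
    rw [this]; exact h34.1
  have h3p : (3 : ℕ) ∣ 2 * p - 1 := by
    have : 2 * p = 4 ^ a := by rw [← h2r, ha, pow_mul]; norm_num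
    rw [this]; exact h34.2
  have h3d : (3 : ℕ) ∣ d := by
    rw [hB]; exact dvd_add (h3x.mul_left p) h3p
  have h3N : (3 : ℕ) ∣ N := by
    rw [hN]; exact (h3x.mul_left (x + 1))
  have h3g : (3 : ℕ) ∣ g := Nat.dvd_gcd h3d h3N
  exact Nat.dvd_antisymm hg3 h3g
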